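/- For every s > 0 and every y ∈ (0,1), ∫₁^∞ (1 − exp(−s·x^{−1/y})) dx = s^y · [Γ(1−y) + y · ∫_s^∞ t^{−y−1} e^{−t} dt] − 1; that is, the integral equals ħ(s, y). -/

import Mathlib

open MeasureTheory Set

/-- For every `s > 0` and every `y ∈ (0,1)`,
`∫₁^∞ (1 − exp(−s·x^{−1/y})) dx = s^y · [Γ(1−y) + y · ∫_s^∞ t^{−y−1} e^{−t} dt] − 1`,
i.e. the integral equals `ħ(s, y)`. -/
theorem hbar_integral_representation (s y : ℝ) (hs : 0 < s) (hy : y ∈ Set.Ioo (0 : ℝ) 1) :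
    ∫ x in Ioi (1 : ℝ), (1 - Real.exp (-s * x ^ (-(1 / y)))) =
      s ^ y * (Real.Gamma (1 - y) + y * ∫ t in Ioi s, t ^ (-y - 1) * Real.exp (-t)) - 1 := by
  obtain ⟨hy0, hy1⟩ := hy
  have hy0' : y ≠ 0 := hy0.ne'
  have hsy : (0:ℝ) < s ^ y := Real.rpow_pos_of_pos hs y
  have hss : s ^ y * s ^ (-y) = 1 := by
    rw [← Real.rpow_add hs]; simp
  have hexp_le_one : ∀ t : ℝ, 0 ≤ t → Real.exp (-t) ≤ 1 := fun t ht => by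
    rw [show (1:ℝ) = Real.exp 0 by simp]
    exact Real.exp_le_exp.mpr (by linarith)
  have hone_sub_exp : ∀ t : ℝ, 1 - Real.exp (-t) ≤ t := fun t => by
    have := Real.add_one_le_exp (-t); linarith
  -- integrability of `k t = t ^ (-y) * exp (-t)` on `Ioi 0`
  have hkint : IntegrableOn (fun t : ℝ => t ^ (-y) * Real.exp (-t)) (Ioi 0) := by
    have h := Real.GammaIntegral_convergent (s := 1 - y) (by linarith)
    refine h.congr_fun (fun x hx => ?_) measurableSet_Ioi
    rw [show (1:ℝ) - y - 1 = -y by ring, mul_comm]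
  have hIoc_k : IntegrableOn (fun t : ℝ => t ^ (-y) * Real.exp (-t)) (Ioc 0 s) :=
    hkint.mono_set Ioc_subset_Ioi_self
  have hIoi_k : IntegrableOn (fun t : ℝ => t ^ (-y) * Real.exp (-t)) (Ioi s) :=
    hkint.mono_set (Ioi_subset_Ioi hs.le)
  -- integrability of `m t = t ^ (-y-1) * exp (-t)` on `Ioi s`
  have hmint : IntegrableOn (fun t : ℝ => t ^ (-y - 1) * Real.exp (-t)) (Ioi s) := by
    have hbd : Integrable (fun t : ℝ => s ^ (-y - 1) * Real.exp (-(1:ℝ) * t))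
        (volume.restrict (Ioi s)) := (exp_neg_integrableOn_Ioi s one_pos).const_mul _
    refine hbd.mono ?_ ?_
    · apply Measurable.aestronglyMeasurable
      fun_prop
    · filter_upwards [ae_restrict_mem measurableSet_Ioi] with t ht
      have ht0 : 0 < t := hs.trans ht
      have h1 : t ^ (-y - 1) ≤ s ^ (-y - 1) :=
        Real.rpow_le_rpow_of_nonpos hs (le_of_lt ht) (by linarith)
      have h2 : (0:ℝ) < t ^ (-y - 1) := Real.rpow_pos_of_pos ht0 _
      have h3 : (0:ℝ) < s ^ (-y - 1) := Real.rpow_pos_of_pos hs _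
      have he : (0:ℝ) < Real.exp (-t) := Real.exp_pos _
      rw [Real.norm_eq_abs, Real.norm_eq_abs, abs_of_pos (by positivity),
        abs_of_pos (by positivity), neg_one_mul]
      nlinarith
  -- derivative of `exp (-t)`
  have hexp' : ∀ t : ℝ, HasDerivAt (fun u : ℝ => Real.exp (-u)) (-Real.exp (-t)) t := by
    intro t
    exact ((Real.hasDerivAt_exp (-t)).comp t (hasDerivAt_neg t)).congr_deriv (by ring)
  set E : ℝ → ℝ := fun t =>
    s ^ y * (y * t ^ (-y - 1) * (1 - Real.exp (-t)) - t ^ (-y) * Real.exp (-t)) with hE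
  set Φ : ℝ → ℝ := fun t => -(s ^ y) * (t ^ (-y) * (1 - Real.exp (-t))) with hΦ
  have hΦderiv : ∀ t : ℝ, 0 < t → HasDerivAt Φ (E t) t := by
    intro t ht
    have d1 : HasDerivAt (fun u : ℝ => u ^ (-y)) (-y * t ^ (-y - 1)) t :=
      Real.hasDerivAt_rpow_const (Or.inl ht.ne')
    have d2 : HasDerivAt (fun u : ℝ => 1 - Real.exp (-u)) (Real.exp (-t)) t := by
      simpa using (hexp' t).const_sub 1
    have hmul := (d1.mul d2).const_mul (-(s ^ y))
    rw [hΦ, hE]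
    exact hmul.congr_deriv (by ring)
  have hEcont : ∀ t : ℝ, 0 < t → ContinuousAt E t := by
    intro t ht
    have h1 : ContinuousAt (fun u : ℝ => u ^ (-y - 1)) t :=
      Real.continuousAt_rpow_const t _ (Or.inl ht.ne')
    have h2 : ContinuousAt (fun u : ℝ => u ^ (-y)) t :=
      Real.continuousAt_rpow_const t _ (Or.inl ht.ne')
    have h3 : ContinuousAt (fun u : ℝ => Real.exp (-u)) t :=
      (Real.continuous_exp.comp continuous_neg).continuousAt
    rw [hE]
    exact continuousAt_const.mul (((continuousAt_const.mul h1).mul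
      (continuousAt_const.sub h3)).sub (h2.mul h3))
  have hEint : IntervalIntegrable E volume 0 s := by
    rw [intervalIntegrable_iff_integrableOn_Ioc_of_le hs.le]
    have hbd : Integrable (fun t : ℝ => (s ^ y * (y + 1)) * t ^ (-y))
        (volume.restrict (Ioc 0 s)) :=
      ((intervalIntegral.intervalIntegrable_rpow' (show (-1:ℝ) < -y by linarith)).1).const_mul _
    refine hbd.mono ?_ ?_
    · exact (continuousOn_of_forall_continuousAt (fun t ht => hEcont t ht.1)).aestronglyMeasurable
        measurableSet_Ioc
    · filter_upwards [ae_restrict_mem measurableSet_Ioc] with t ht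
      have ht0 : 0 < t := ht.1
      have tp : (0:ℝ) < t ^ (-y) := Real.rpow_pos_of_pos ht0 _
      have tp1 : (0:ℝ) < t ^ (-y - 1) := Real.rpow_pos_of_pos ht0 _
      have he : (0:ℝ) < Real.exp (-t) := Real.exp_pos _
      have he1 : Real.exp (-t) ≤ 1 := hexp_le_one t ht0.le
      have h1 : 1 - Real.exp (-t) ≤ t := hone_sub_exp t
      have htpow : t ^ (-y - 1) * t = t ^ (-y) := by
        rw [← Real.rpow_add_one ht0.ne' (-y - 1)]; congr 1; ring
      simp only [Real.norm_eq_abs, hE]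
      rw [abs_mul, abs_of_pos hsy,
        abs_of_pos (by positivity : (0:ℝ) < (s ^ y * (y + 1)) * t ^ (-y))]
      have habs : |y * t ^ (-y - 1) * (1 - Real.exp (-t)) - t ^ (-y) * Real.exp (-t)|
          ≤ (y + 1) * t ^ (-y) := by
        rw [abs_le]
        constructor
        · nlinarith [mul_nonneg (mul_nonneg hy0.le tp1.le)
              (show (0:ℝ) ≤ 1 - Real.exp (-t) by linarith),
            mul_le_mul_of_nonneg_left he1 tp.le, mul_pos hy0 tp]
        · nlinarith [mul_le_mul_of_nonneg_left h1
            (by positivity : (0:ℝ) ≤ y * t ^ (-y - 1)), mul_pos tp he]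
      calc s ^ y * |y * t ^ (-y - 1) * (1 - Real.exp (-t)) - t ^ (-y) * Real.exp (-t)|
          ≤ s ^ y * ((y + 1) * t ^ (-y)) := mul_le_mul_of_nonneg_left habs hsy.le
        _ = (s ^ y * (y + 1)) * t ^ (-y) := by ring
  have hΦ0 : Filter.Tendsto Φ (nhdsWithin 0 (Ioi 0)) (nhds 0) := by
    have key : Filter.Tendsto (fun t : ℝ => t ^ (-y) * (1 - Real.exp (-t)))
        (nhdsWithin 0 (Ioi 0)) (nhds 0) := by
      apply squeeze_zero' (g := fun t : ℝ => t ^ (1 - y))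
      · filter_upwards [self_mem_nhdsWithin] with t (ht : (0:ℝ) < t)
        have h1 : Real.exp (-t) ≤ 1 := hexp_le_one t ht.le
        have tp : (0:ℝ) < t ^ (-y) := Real.rpow_pos_of_pos ht _
        nlinarith
      · filter_upwards [self_mem_nhdsWithin] with t (ht : (0:ℝ) < t)
        have tp : (0:ℝ) < t ^ (-y) := Real.rpow_pos_of_pos ht _
        have h1 : 1 - Real.exp (-t) ≤ t := hone_sub_exp t
        have htpow : t ^ (-y) * t = t ^ (1 - y) := by
          rw [← Real.rpow_add_one ht.ne' (-y)]; congr 1; ring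
        nlinarith
      · have hc : ContinuousAt (fun t : ℝ => t ^ (1 - y)) 0 :=
          Real.continuousAt_rpow_const 0 (1 - y) (Or.inr (by linarith))
        have h : Filter.Tendsto (fun t : ℝ => t ^ (1 - y)) (nhdsWithin 0 (Ioi 0))
            (nhds ((0:ℝ) ^ (1 - y))) := hc.tendsto.mono_left nhdsWithin_le_nhds
        simpa [Real.zero_rpow (show (1:ℝ) - y ≠ 0 by intro h; linarith [h])] using h
    have h := key.const_mul (-(s ^ y))
    rw [hΦ]
    simpa using h
  have hΦs : Filter.Tendsto Φ (nhdsWithin s (Iio s)) (nhds (Φ s)) := by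
    have h2 : ContinuousAt (fun u : ℝ => u ^ (-y)) s :=
      Real.continuousAt_rpow_const s _ (Or.inl hs.ne')
    have h3 : ContinuousAt (fun u : ℝ => Real.exp (-u)) s :=
      (Real.continuous_exp.comp continuous_neg).continuousAt
    have hc : ContinuousAt Φ s := by
      rw [hΦ]
      exact continuousAt_const.mul (h2.mul (continuousAt_const.sub h3))
    exact hc.tendsto.mono_left nhdsWithin_le_nhds
  have hFTC : ∫ t in Ioc (0:ℝ) s, E t = Φ s := by
    have h := intervalIntegral.integral_eq_sub_of_hasDerivAt_of_tendsto hs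
      (fun t ht => hΦderiv t ht.1) hEint hΦ0 hΦs
    rw [intervalIntegral.integral_of_le hs.le] at h
    simpa using h
  -- change of variables `x = s^y * t^(-y)`
  have hCOV : ∫ x in Ioi (1:ℝ), (1 - Real.exp (-s * x ^ (-(1 / y)))) =
      ∫ t in Ioc (0:ℝ) s, (E t + s ^ y * (t ^ (-y) * Real.exp (-t))) := by
    have hf' : ∀ t ∈ Ioo (0:ℝ) s, HasDerivWithinAt (fun u : ℝ => s ^ y * u ^ (-y))
        (s ^ y * (-y * t ^ (-y - 1))) (Ioo 0 s) t := fun t ht =>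
      ((Real.hasDerivAt_rpow_const (p := -y) (Or.inl ht.1.ne')).const_mul
        (s ^ y)).hasDerivWithinAt
    have hinj : InjOn (fun u : ℝ => s ^ y * u ^ (-y)) (Ioo 0 s) := by
      have hanti : StrictAntiOn (fun u : ℝ => s ^ y * u ^ (-y)) (Ioo 0 s) := by
        intro a ha b hb hab
        have h1 : b ^ (-y) < a ^ (-y) :=
          Real.rpow_lt_rpow_of_neg ha.1 hab (by linarith)
        exact mul_lt_mul_of_pos_left h1 hsy
      exact hanti.injOn
    have himg : (fun u : ℝ => s ^ y * u ^ (-y)) '' Ioo 0 s = Ioi 1 := by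
      ext x
      constructor
      · rintro ⟨t, ht, rfl⟩
        have h1 : s ^ (-y) < t ^ (-y) :=
          Real.rpow_lt_rpow_of_neg ht.1 ht.2 (by linarith)
        have h2 : s ^ y * s ^ (-y) < s ^ y * t ^ (-y) := mul_lt_mul_of_pos_left h1 hsy
        rw [hss] at h2
        exact h2
      · intro hx
        have hx1 : (1:ℝ) < x := hx
        have hx0 : (0:ℝ) < x := lt_trans one_pos hx1
        refine ⟨s * x ^ (-(1 / y)), ⟨by positivity, ?_⟩, ?_⟩
        · have h1 : x ^ (-(1 / y)) < 1 :=
            Real.rpow_lt_one_of_one_lt_of_neg hx1 (by rw [neg_lt, neg_zero]; positivity)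
          calc s * x ^ (-(1 / y)) < s * 1 := mul_lt_mul_of_pos_left h1 hs
            _ = s := mul_one s
        · show s ^ y * (s * x ^ (-(1 / y))) ^ (-y) = x
          have hu : (0:ℝ) ≤ x ^ (-(1 / y)) := (Real.rpow_pos_of_pos hx0 _).le
          rw [Real.mul_rpow hs.le hu, ← mul_assoc, hss, one_mul,
            ← Real.rpow_mul hx0.le,
            show (-(1 / y)) * (-y) = 1 by field_simp,
            Real.rpow_one]
    have hmain := integral_image_eq_integral_abs_deriv_smul measurableSet_Ioo hf' hinj
      (fun x => 1 - Real.exp (-s * x ^ (-(1 / y))))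
    rw [himg] at hmain
    rw [hmain, integral_Ioc_eq_integral_Ioo]
    refine setIntegral_congr_fun measurableSet_Ioo (fun t ht => ?_)
    have ht0 : 0 < t := ht.1
    have tp1 : (0:ℝ) < t ^ (-y - 1) := Real.rpow_pos_of_pos ht0 _
    have tp : (0:ℝ) < t ^ (-y) := Real.rpow_pos_of_pos ht0 _
    have habs : |s ^ y * (-y * t ^ (-y - 1))| = s ^ y * (y * t ^ (-y - 1)) := by
      rw [abs_mul, abs_of_pos hsy, abs_of_neg (by nlinarith : -y * t ^ (-y - 1) < 0)]
      ring
    have harg : -s * (s ^ y * t ^ (-y)) ^ (-(1 / y)) = -t := by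
      rw [Real.mul_rpow hsy.le tp.le, ← Real.rpow_mul hs.le, ← Real.rpow_mul ht0.le,
        show y * (-(1 / y)) = -1 by field_simp,
        show (-y) * (-(1 / y)) = 1 by field_simp,
        Real.rpow_one, Real.rpow_neg_one]
      field_simp
    rw [smul_eq_mul, habs, harg, hE]
    ring
  have hLHS : ∫ x in Ioi (1:ℝ), (1 - Real.exp (-s * x ^ (-(1 / y)))) =
      Φ s + s ^ y * ∫ t in Ioc (0:ℝ) s, t ^ (-y) * Real.exp (-t) := by
    rw [hCOV, integral_add ((intervalIntegrable_iff_integrableOn_Ioc_of_le hs.le).mp hEint)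
      (hIoc_k.const_mul (s ^ y)), hFTC, integral_const_mul]
  -- Gamma split
  have hG : Real.Gamma (1 - y) =
      (∫ t in Ioc (0:ℝ) s, t ^ (-y) * Real.exp (-t)) +
        ∫ t in Ioi s, t ^ (-y) * Real.exp (-t) := by
    rw [Real.Gamma_eq_integral (show (0:ℝ) < 1 - y by linarith)]
    have h1 : ∫ x in Ioi (0:ℝ), Real.exp (-x) * x ^ (1 - y - 1) =
        ∫ t in Ioi (0:ℝ), t ^ (-y) * Real.exp (-t) :=
      setIntegral_congr_fun measurableSet_Ioi (fun x hx => by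
        rw [show (1:ℝ) - y - 1 = -y by ring, mul_comm])
    rw [h1, ← Ioc_union_Ioi_eq_Ioi hs.le,
      setIntegral_union (Ioc_disjoint_Ioi le_rfl) measurableSet_Ioi hIoc_k hIoi_k]
  -- FTC on `Ioi s` for the incomplete Gamma part
  have hΨ : y * (∫ t in Ioi s, t ^ (-y - 1) * Real.exp (-t)) =
      s ^ (-y) * Real.exp (-s) - ∫ t in Ioi s, t ^ (-y) * Real.exp (-t) := by
    have hderiv : ∀ t ∈ Ioi s, HasDerivAt (fun u : ℝ => -(u ^ (-y) * Real.exp (-u)))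
        (y * (t ^ (-y - 1) * Real.exp (-t)) + t ^ (-y) * Real.exp (-t)) t := by
      intro t ht
      have ht0 : 0 < t := hs.trans ht
      have d1 : HasDerivAt (fun u : ℝ => u ^ (-y)) (-y * t ^ (-y - 1)) t :=
        Real.hasDerivAt_rpow_const (Or.inl ht0.ne')
      have hmul := (d1.mul (hexp' t)).neg
      exact hmul.congr_deriv (by ring)
    have hint : IntegrableOn
        (fun t : ℝ => y * (t ^ (-y - 1) * Real.exp (-t)) + t ^ (-y) * Real.exp (-t))
        (Ioi s) := (hmint.const_mul y).add hIoi_k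
    have hcont : ContinuousWithinAt (fun u : ℝ => -(u ^ (-y) * Real.exp (-u))) (Ici s) s := by
      have h2 : ContinuousAt (fun u : ℝ => u ^ (-y)) s :=
        Real.continuousAt_rpow_const s _ (Or.inl hs.ne')
      exact ((h2.mul ((Real.continuous_exp.comp continuous_neg).continuousAt)).neg).continuousWithinAt
    have htop : Filter.Tendsto (fun u : ℝ => -(u ^ (-y) * Real.exp (-u)))
        Filter.atTop (nhds 0) := by
      have h := (tendsto_rpow_neg_atTop hy0).mul Real.tendsto_exp_neg_atTop_nhds_zero
      simpa using h.neg
    have hres := integral_Ioi_of_hasDerivAt_of_tendsto hcont hderiv hint htop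
    rw [integral_add (hmint.const_mul y) hIoi_k, integral_const_mul] at hres
    have hΨs : (0:ℝ) - -(s ^ (-y) * Real.exp (-s)) = s ^ (-y) * Real.exp (-s) := by ring
    rw [hΨs] at hres
    linarith
  rw [hLHS, hG, hΨ]
  simp only [hΦ]
  linear_combination (-1 : ℝ) * hss
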